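/- arXiv:0905.0428 — 8 statements merged into one kernel-verified Lean document; each statement's English description precedes it below -/
import Mathlib

section
/- Suppose that every nonzero element of the inner additive code C₀ has Hamming weight at least d_r; suppose that for every level j ∈ {1,…,r−1}, every pair of index tuples i, i′ ∈ I = I₁ × ⋯ × I_{r−1} that agree in coordinates 1,…,j−1 and differ in coordinate j, and all c, c′ ∈ C₀, the Hamming distance between c + t_i and c′ + t_{i′} is at least d_j; and suppose each outer code A_j ⊆ I_j^N has minimum Hamming distance at least δ_j. Then the generalized concatenated code C_gc has minimum distance at least min{δ₁d₁, δ₂d₂, …, δ_{r−1}d_{r−1}, d_r}: any two distinct codewords of C_gc are at total Hamming distance at least this minimum. -/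
/-!
Compare two codewords built from admissible arrays `a` and `a'`. If `a = a'`, the two words
differ in a block where their difference lies in `C₀`, so that block alone contributes at least
`d_r`. Otherwise let `j` be the first level whose columns differ. The outer code `A_j` makes the
`j`-th columns differ in at least `δ_j` blocks, and in each of these blocks the index tuples
agree below level `j` and differ at `j`, so the block contributes at least `d_j`.
-/

theorem exists_ne_forall_lt_eq {κ : Type*} [LT κ] [WellFoundedLT κ] {β : κ → Type*}
    {f g : ∀ k, β k} (h : f ≠ g) : ∃ k, f k ≠ g k ∧ ∀ k' < k, f k' = g k' := by
  obtain ⟨k, hk, hmin⟩ := wellFounded_lt.has_min {k | f k ≠ g k} (Function.ne_iff.mp h)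
  exact ⟨k, hk, fun k' hk' => not_not.mp fun hne => hmin k' hne hk'⟩

theorem le_hammingDist_of_sub_mem {ι β : Type*} [Fintype ι] [AddGroup β] [DecidableEq β]
    {C : AddSubgroup (ι → β)} {d : ℕ} (hC : ∀ c ∈ C, c ≠ 0 → d ≤ hammingNorm c)
    {x y : ι → β} (hmem : x - y ∈ C) (hne : x ≠ y) : d ≤ hammingDist x y := by
  have hnorm : hammingDist x y = hammingNorm (x - y) := by
    simp_rw [hammingDist, hammingNorm, Pi.sub_apply, ne_eq, sub_eq_zero]
  exact hnorm ▸ hC _ hmem (sub_ne_zero.mpr hne)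

theorem hammingDist_mul_le_sum {ι β : Type*} [Fintype ι] [DecidableEq β] {u v : ι → β}
    {d : ℕ} {f : ι → ℕ} (h : ∀ i, u i ≠ v i → d ≤ f i) :
    hammingDist u v * d ≤ ∑ i, f i :=
  calc hammingDist u v * d = ∑ i with u i ≠ v i, d := by simp [hammingDist]
    _ ≤ ∑ i with u i ≠ v i, f i :=
      Finset.sum_le_sum fun i hi => h i (Finset.mem_filter.mp hi).2
    _ ≤ ∑ i, f i := Finset.sum_le_sum_of_subset (Finset.filter_subset _ _)

theorem gc_code_min_distance_general
    {F : Type} [AddCommGroup F] [DecidableEq F]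
    {n N R : ℕ}
    (ι : Fin R → Type) [∀ j, DecidableEq (ι j)]
    (C₀ : AddSubgroup (Fin n → F))
    (t : (∀ j, ι j) → (Fin n → F))
    (A : ∀ j, Set (Fin N → ι j))
    (d : Fin R → ℕ) (dr : ℕ) (δ : Fin R → ℕ)
    (hinner : ∀ c ∈ C₀, c ≠ 0 → dr ≤ hammingNorm c)
    (hlevel : ∀ j : Fin R, ∀ i i' : ∀ j', ι j',
        (∀ j' : Fin R, j' < j → i j' = i' j') → i j ≠ i' j →
        ∀ c c' : Fin n → F, c ∈ C₀ → c' ∈ C₀ →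
          d j ≤ hammingDist (c + t i) (c' + t i'))
    (houter : ∀ j : Fin R, ∀ a ∈ A j, ∀ a' ∈ A j, a ≠ a' → δ j ≤ hammingDist a a')
    (x y : Fin N → Fin n → F)
    (hx : ∃ (c : Fin N → Fin n → F) (a : Fin N → ∀ j, ι j),
        (∀ ν, c ν ∈ C₀) ∧ (∀ j, (fun ν => a ν j) ∈ A j) ∧ x = fun ν => c ν + t (a ν))
    (hy : ∃ (c : Fin N → Fin n → F) (a : Fin N → ∀ j, ι j),
        (∀ ν, c ν ∈ C₀) ∧ (∀ j, (fun ν => a ν j) ∈ A j) ∧ y = fun ν => c ν + t (a ν))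
    (hxy : x ≠ y) :
    min (dr : ℕ∞) (Finset.univ.inf fun j => ((δ j * d j : ℕ) : ℕ∞))
      ≤ ((∑ ν, hammingDist (x ν) (y ν) : ℕ) : ℕ∞) := by
  obtain ⟨c, a, hc, ha, rfl⟩ := hx
  obtain ⟨c', a', hc', ha', rfl⟩ := hy
  by_cases haa : a = a'
  · subst haa
    obtain ⟨ν, hν⟩ := Function.ne_iff.mp hxy
    have hblock : dr ≤ hammingDist (c ν + t (a ν)) (c' ν + t (a ν)) :=
      le_hammingDist_of_sub_mem hinner (by simpa using sub_mem (hc ν) (hc' ν)) hν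
    have hsum : dr ≤ ∑ μ, hammingDist (c μ + t (a μ)) (c' μ + t (a μ)) :=
      hblock.trans (Finset.single_le_sum_of_canonicallyOrdered
        (f := fun μ => hammingDist (c μ + t (a μ)) (c' μ + t (a μ))) (Finset.mem_univ ν))
    exact (min_le_left _ _).trans (by exact_mod_cast hsum)
  · have hcols : (fun j ν => a ν j) ≠ fun j ν => a' ν j := fun h =>
      haa (funext fun ν => funext fun j => congrFun (congrFun h j) ν)
    obtain ⟨j, hj, hbelow⟩ := exists_ne_forall_lt_eq hcols
    have hsum : δ j * d j ≤ ∑ ν, hammingDist (c ν + t (a ν)) (c' ν + t (a' ν)) :=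
      calc δ j * d j ≤ hammingDist (fun ν => a ν j) (fun ν => a' ν j) * d j :=
            Nat.mul_le_mul_right _ (houter j _ (ha j) _ (ha' j) hj)
        _ ≤ _ := hammingDist_mul_le_sum fun ν hν =>
            hlevel j (a ν) (a' ν) (fun j' h => congrFun (hbelow j' h) ν) hν _ _ (hc ν) (hc' ν)
    exact (min_le_right _ _).trans <|
      (Finset.inf_le (Finset.mem_univ j)).trans (by exact_mod_cast hsum)

/-- **Generalized concatenated code: minimum distance.**
Setup: `F` is a finite additive abelian group, `C₀ ≤ F^n` the inner additive code,
`ι j` (for `j : Fin R`, `R = r - 1`) the index sets, `t` the coset-representative map,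
`A j ⊆ (ι j)^N` the outer codes, `d j` the level distances (`d_1, …, d_{r-1}`),
`dr = d_r` the inner-code distance, `δ j` the outer distances.
Any two distinct codewords of the generalized concatenated code are at total Hamming
distance at least `min {δ₁d₁, …, δ_{r-1}d_{r-1}, d_r}` (the minimum is formed in `ℕ∞`
so that it is also meaningful for `R = 0`). -/
theorem gc_code_min_distance
    {F : Type} [AddCommGroup F] [Fintype F] [DecidableEq F]
    {n N R : ℕ}
    (ι : Fin R → Type) [∀ j, Fintype (ι j)] [∀ j, DecidableEq (ι j)]
    (C₀ : AddSubgroup (Fin n → F))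
    (t : (∀ j, ι j) → (Fin n → F))
    (A : ∀ j, Set (Fin N → ι j))
    (d : Fin R → ℕ) (dr : ℕ) (δ : Fin R → ℕ)
    (hinner : ∀ c ∈ C₀, c ≠ 0 → dr ≤ hammingNorm c)
    (hlevel : ∀ j : Fin R, ∀ i i' : ∀ j', ι j',
        (∀ j' : Fin R, j' < j → i j' = i' j') → i j ≠ i' j →
        ∀ c c' : Fin n → F, c ∈ C₀ → c' ∈ C₀ →
          d j ≤ hammingDist (c + t i) (c' + t i'))
    (houter : ∀ j : Fin R, ∀ a ∈ A j, ∀ a' ∈ A j, a ≠ a' → δ j ≤ hammingDist a a')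
    (x y : Fin N → Fin n → F)
    (hx : ∃ (c : Fin N → Fin n → F) (a : Fin N → ∀ j, ι j),
        (∀ ν, c ν ∈ C₀) ∧ (∀ j, (fun ν => a ν j) ∈ A j) ∧ x = fun ν => c ν + t (a ν))
    (hy : ∃ (c : Fin N → Fin n → F) (a : Fin N → ∀ j, ι j),
        (∀ ν, c ν ∈ C₀) ∧ (∀ j, (fun ν => a ν j) ∈ A j) ∧ y = fun ν => c ν + t (a ν))
    (hxy : x ≠ y) :
    min (dr : ℕ∞) (Finset.univ.inf fun j => ((δ j * d j : ℕ) : ℕ∞))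
      ≤ ((∑ ν, hammingDist (x ν) (y ν) : ℕ) : ℕ∞) :=
  gc_code_min_distance_general ι C₀ t A d dr δ hinner hlevel houter x y hx hy hxy
end

section
/- Fix a level j ∈ {1,…,r−1}. Suppose that for every pair of index tuples i, i′ ∈ I that agree in coordinates 1,…,j−1 and differ in coordinate j, and all c, c′ ∈ C₀, the Hamming distance between c + t_i and c′ + t_{i′} is at least d_j, and suppose the outer code A_j has minimum Hamming distance at least δ_j. If two codewords of the generalized concatenated code C_gc arise from admissible arrays a and a′ whose columns 1,…,j−1 coincide but whose j-th columns differ, then the two codewords are at total Hamming distance at least δ_j · d_j. -/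
/-- **Generalized concatenation: distance at a fixed level `j`.**
If two codewords of the generalized concatenated code arise from admissible arrays `a`, `a'`
whose columns `1, …, j-1` coincide but whose `j`-th columns differ, then the codewords are at
total Hamming distance at least `δj * dj`. -/
theorem gc_code_level_distance
    {F : Type} [AddCommGroup F] [Fintype F] [DecidableEq F]
    {n N R : ℕ}
    (ι : Fin R → Type) [∀ j, Fintype (ι j)] [∀ j, DecidableEq (ι j)]
    (C₀ : AddSubgroup (Fin n → F))
    (t : (∀ j, ι j) → (Fin n → F))
    (A : ∀ j, Set (Fin N → ι j))
    (j : Fin R) (dj δj : ℕ)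
    (hlevel : ∀ i i' : ∀ j', ι j',
        (∀ j' : Fin R, j' < j → i j' = i' j') → i j ≠ i' j →
        ∀ c c' : Fin n → F, c ∈ C₀ → c' ∈ C₀ →
          dj ≤ hammingDist (c + t i) (c' + t i'))
    (houter : ∀ a ∈ A j, ∀ a' ∈ A j, a ≠ a' → δj ≤ hammingDist a a')
    (c c' : Fin N → Fin n → F) (a a' : Fin N → ∀ j', ι j')
    (hc : ∀ ν, c ν ∈ C₀) (hc' : ∀ ν, c' ν ∈ C₀)
    (ha : ∀ j', (fun ν => a ν j') ∈ A j')
    (ha' : ∀ j', (fun ν => a' ν j') ∈ A j')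
    (hagree : ∀ j' : Fin R, j' < j → (fun ν => a ν j') = (fun ν => a' ν j'))
    (hdiff : (fun ν => a ν j) ≠ (fun ν => a' ν j)) :
    δj * dj ≤ ∑ ν, hammingDist (c ν + t (a ν)) (c' ν + t (a' ν)) := by
  classical
  set S : Finset (Fin N) := Finset.univ.filter (fun ν => a ν j ≠ a' ν j) with hS
  have hcard : δj ≤ S.card := by
    have := houter _ (ha j) _ (ha' j) hdiff
    simpa [hammingDist, hS] using this
  calc δj * dj ≤ S.card * dj := Nat.mul_le_mul_right _ hcard
    _ = ∑ ν ∈ S, dj := by simp [Finset.sum_const, Nat.mul_comm]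
    _ ≤ ∑ ν ∈ S, hammingDist (c ν + t (a ν)) (c' ν + t (a' ν)) := by
        apply Finset.sum_le_sum
        intro ν hν
        have hne : a ν j ≠ a' ν j := by simpa [hS] using hν
        exact hlevel (a ν) (a' ν)
          (fun j' hj' => congrFun (hagree j' hj') ν) hne _ _ (hc ν) (hc' ν)
    _ ≤ ∑ ν, hammingDist (c ν + t (a ν)) (c' ν + t (a' ν)) :=
        Finset.sum_le_sum_of_subset (Finset.subset_univ S)
end

section
/- Let q = p^m be a prime power and E = GF(q²). Let D₀ ⊇ D₁ ⊇ ⋯ ⊇ D_{r−1} be F_p-linear codes in E^n such that D_{r−1}^⊥ ⊆ D_{r−1} (symplectic dual) and such that for each j = 1,…,r every nonzero element of D_{j−1} has Hamming weight at least d_j (where D_{r−1} serves for j = r). Let τ : (D₀/D₁) × (D₁/D₂) × ⋯ × (D_{r−2}/D_{r−1}) → E^n be an F_p-linear map such that for each j and each tuple a with a₁ = ⋯ = a_{j−1} = 0 one has τ(a) ∈ D_{j−1} and τ(a) + D_j = a_j in D_{j−1}/D_j. For j = 1,…,r−1 let A_j be an F_p-linear subspace of (D_{j−1}/D_j)^N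 every nonzero element of which has at least δ_j nonzero coordinates. Define D_gc ⊆ (E^n)^N as the set of all words (c_ν + τ(a(ν)))_{ν<N} with each c_ν ∈ D_{r−1} and a : Fin N → ∏_j (D_{j−1}/D_j) such that for each j the j-th column of a lies in A_j. Then: (i) D_gc is an F_p-linear subspace of (E^n)^N ≅ E^{nN}; (ii) D_gc^⊥ ⊆ D_gc, where the dual is taken with respect to the symplectic pairing summed over all nN coordinates; (iii) |D_gc| = |A₁|·|A₂|⋯|A_{r−1}|·|D_{r−1}|^N; and (iv) every nonzero element of D_gc has Hamming weight at least min{δ₁d₁, …, δ_{r−1}d_{r−1}, d_r}. -/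
/-- The symplectic pairing `⟨u,v⟩ₛ = ∑ i, (uᵢ·vᵢ^q − uᵢ^q·vᵢ)` on `E^n`, where
`q = p^m` and `E = GF(q²) = GaloisField p (2m)`. -/
noncomputable def symplPair (p m : ℕ) [Fact p.Prime] {n : ℕ}
    (u v : Fin n → GaloisField p (2 * m)) : GaloisField p (2 * m) :=
  ∑ i, (u i * v i ^ p ^ m - u i ^ p ^ m * v i)

/-- The quotient `D_{j-1} / D_j` of consecutive codes in a nested chain
`D 0 ⊇ D 1 ⊇ ⋯ ⊇ D R` of `𝔽ₚ`-linear codes (zero-based indexing). -/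
abbrev chainQuot {p m n R : ℕ} [Fact p.Prime]
    (D : Fin (R + 1) → Submodule (ZMod p) (Fin n → GaloisField p (2 * m)))
    (j : Fin R) : Type :=
  D j.castSucc ⧸ (D j.succ).comap (D j.castSucc).subtype

lemma symplPair_zero_left (p m : ℕ) [Fact p.Prime] {n : ℕ}
    (v : Fin n → GaloisField p (2 * m)) : symplPair p m 0 v = 0 := by
  have hp : p ^ m ≠ 0 := pow_ne_zero m (Nat.Prime.ne_zero Fact.out)
  simp [symplPair, zero_pow hp]

lemma chain_last_le {p m n R : ℕ} [Fact p.Prime]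
    (D : Fin (R + 1) → Submodule (ZMod p) (Fin n → GaloisField p (2 * m)))
    (hchain : ∀ j : Fin R, D j.succ ≤ D j.castSucc) :
    ∀ i : Fin (R + 1), D (Fin.last R) ≤ D i := by
  have key : ∀ k, ∀ i : Fin (R + 1), i.val + k = R → D (Fin.last R) ≤ D i := by
    intro k
    induction k with
    | zero =>
      intro i hi
      have : i = Fin.last R := Fin.ext (by simpa using hi)
      simp [this]
    | succ k ih =>
      intro i hi
      have hlt : i.val < R := by omega
      have h2 := ih (⟨i.val, hlt⟩ : Fin R).succ (by simp [Fin.succ]; omega)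
      have h1 : i = (⟨i.val, hlt⟩ : Fin R).castSucc := Fin.ext rfl
      calc D (Fin.last R) ≤ D (⟨i.val, hlt⟩ : Fin R).succ := h2
        _ ≤ D (⟨i.val, hlt⟩ : Fin R).castSucc := hchain _
        _ = D i := by rw [← h1]
  intro i; exact key (R - i.val) i (by omega)

set_option maxHeartbeats 8000000 in
set_option synthInstance.maxHeartbeats 4000000 in
/-- **Generalized concatenated normalizer codes (Theorem 2 / Theorem 4 of the paper).**
Let `q = p^m`, `E = GF(q²)`, and let `D 0 ⊇ D 1 ⊇ ⋯ ⊇ D R` (`R = r - 1`) be nested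
`𝔽ₚ`-linear codes in `E^n` such that `D R` contains its symplectic dual and every nonzero
element of `D j` has Hamming weight at least `d j` (`d j` is the paper's `d_{j+1}`).
Let `τ` be an `𝔽ₚ`-linear choice of coset representatives for the chain, and let
`A j ⊆ (D_{j-1}/D_j)^N` be `𝔽ₚ`-linear outer codes all of whose nonzero elements have at
least `δ j` nonzero coordinates.  Then the generalized concatenated code
`D_gc = {(c_ν + τ(a ν))_ν}` is (i) `𝔽ₚ`-linear, (ii) contains its symplectic dual,
(iii) has cardinality `|A₁|⋯|A_{R}|·|D R|^N`, and (iv) every nonzero element has Hamming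
weight at least `min {δ₁d₁, …, δ_R d_R, d_{r}}` (minimum formed in `ℕ∞`). -/
theorem gc_normalizer_code
    (p m n N R : ℕ) [Fact p.Prime] (hm : 0 < m)
    (D : Fin (R + 1) → Submodule (ZMod p) (Fin n → GaloisField p (2 * m)))
    (hchain : ∀ j : Fin R, D j.succ ≤ D j.castSucc)
    (hdual : ∀ v, (∀ u ∈ D (Fin.last R), symplPair p m u v = 0) → v ∈ D (Fin.last R))
    (d : Fin (R + 1) → ℕ) (δ : Fin R → ℕ)
    (hwt : ∀ j, ∀ c ∈ D j, c ≠ 0 → d j ≤ Nat.card {i : Fin n | c i ≠ 0})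
    (τ : ((j : Fin R) → chainQuot D j) →ₗ[ZMod p] (Fin n → GaloisField p (2 * m)))
    (hτ : ∀ (j : Fin R) (a : (j : Fin R) → chainQuot D j),
        (∀ j' : Fin R, j' < j → a j' = 0) →
        ∃ h : τ a ∈ D j.castSucc,
          Submodule.Quotient.mk (p := (D j.succ).comap (D j.castSucc).subtype)
            ⟨τ a, h⟩ = a j)
    (A : ∀ j : Fin R, Submodule (ZMod p) (Fin N → chainQuot D j))
    (hA : ∀ j, ∀ a ∈ A j, a ≠ 0 → δ j ≤ Nat.card {ν : Fin N | a ν ≠ 0}) :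
    ∃ G : Submodule (ZMod p) (Fin N → Fin n → GaloisField p (2 * m)),
      -- (i) `D_gc` is `𝔽ₚ`-linear
      (G : Set (Fin N → Fin n → GaloisField p (2 * m))) =
        {x | ∃ (c : Fin N → Fin n → GaloisField p (2 * m))
               (a : Fin N → (j : Fin R) → chainQuot D j),
          (∀ ν, c ν ∈ D (Fin.last R)) ∧ (∀ j, (fun ν => a ν j) ∈ A j) ∧
          x = fun ν => c ν + τ (a ν)} ∧
      -- (ii) `D_gc` contains its symplectic dual
      (∀ v, (∀ u ∈ G, ∑ ν, symplPair p m (u ν) (v ν) = 0) → v ∈ G) ∧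
      -- (iii) cardinality
      Nat.card G = (∏ j, Nat.card (A j)) * Nat.card (D (Fin.last R)) ^ N ∧
      -- (iv) minimum weight
      (∀ v ∈ G, v ≠ 0 →
        min ((d (Fin.last R) : ℕ∞))
            (Finset.univ.inf fun j : Fin R => ((δ j * d j.castSucc : ℕ) : ℕ∞))
          ≤ ((∑ ν, Nat.card {i : Fin n | v ν i ≠ 0} : ℕ) : ℕ∞)) := by
  classical
  have hlast := chain_last_le D hchain
  -- the encoding map, built from combinators
  let Φ₁ : (Fin N → D (Fin.last R)) →ₗ[ZMod p] (Fin N → Fin n → GaloisField p (2 * m)) :=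
    LinearMap.pi fun ν => (D (Fin.last R)).subtype.comp (LinearMap.proj ν)
  let Ψ : ((j : Fin R) → A j) →ₗ[ZMod p] (Fin N → Fin n → GaloisField p (2 * m)) :=
    LinearMap.pi fun ν => τ.comp (LinearMap.pi fun j =>
      (LinearMap.proj ν).comp ((A j).subtype.comp (LinearMap.proj j)))
  let Φ : ((Fin N → D (Fin.last R)) × ((j : Fin R) → A j)) →ₗ[ZMod p]
      (Fin N → Fin n → GaloisField p (2 * m)) :=
    Φ₁.comp (LinearMap.fst (ZMod p) _ _) + Ψ.comp (LinearMap.snd (ZMod p) _ _)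
  have hΦ : ∀ x : ((Fin N → D (Fin.last R)) × ((j : Fin R) → A j)), ∀ ν,
      Φ x ν = (x.1 ν : Fin n → GaloisField p (2 * m)) +
        τ (fun j => (x.2 j : Fin N → chainQuot D j) ν) := fun x ν => rfl
  have hzero : ∀ ν, (fun j => ((0 : (j : Fin R) → A j) j : Fin N → chainQuot D j) ν) =
      (0 : (j : Fin R) → chainQuot D j) := fun ν => rfl
  refine ⟨LinearMap.range Φ, ?_, ?_, ?_, ?_⟩
  · -- (i)
    ext x
    constructor
    · rintro ⟨⟨c, a⟩, rfl⟩
      refine ⟨fun ν => c ν, fun ν j => (a j : Fin N → chainQuot D j) ν,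
        fun ν => (c ν).2, fun j => (a j).2, ?_⟩
      funext ν
      exact hΦ ⟨c, a⟩ ν
    · rintro ⟨c, a, hc, ha, rfl⟩
      exact ⟨⟨fun ν => ⟨c ν, hc ν⟩, fun j => ⟨fun ν => a ν j, ha j⟩⟩, rfl⟩
  · -- (ii)
    intro v hv
    have hcomp : ∀ ν₀, v ν₀ ∈ D (Fin.last R) := by
      intro ν₀
      apply hdual
      intro w hw
      have hu : (fun ν => if ν = ν₀ then w else 0) ∈ LinearMap.range Φ := by
        refine ⟨⟨fun ν => if ν = ν₀ then ⟨w, hw⟩ else 0, 0⟩, ?_⟩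
        funext ν
        rw [hΦ, hzero, map_zero, add_zero]
        by_cases h : ν = ν₀ <;> simp [h]
      have := hv _ hu
      rwa [Finset.sum_eq_single ν₀ (fun b _ hb => by
        simp [hb, symplPair_zero_left]) (by simp), if_pos rfl] at this
    refine ⟨⟨fun ν => ⟨v ν, hcomp ν⟩, 0⟩, ?_⟩
    funext ν
    rw [hΦ, hzero, map_zero, add_zero]
  · -- (iii)
    have hkey : ∀ b : (j : Fin R) → chainQuot D j, τ b ∈ D (Fin.last R) → b = 0 := by
      intro b hb
      by_contra hb0
      obtain ⟨j₁, hj₁⟩ := Function.ne_iff.mp hb0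
      set T : Finset (Fin R) := Finset.univ.filter (fun j => b j ≠ 0) with hT
      have hTne : T.Nonempty := ⟨j₁, Finset.mem_filter.mpr ⟨Finset.mem_univ _, hj₁⟩⟩
      set j₀ := T.min' hTne with hj₀
      have hmin : ∀ j' : Fin R, j' < j₀ → b j' = 0 := by
        intro j' hj'
        by_contra hne
        exact absurd (T.min'_le j' (by simp [hT, hne])) (not_le.mpr hj')
      obtain ⟨hmem, hmk⟩ := hτ j₀ b hmin
      have hzero' : Submodule.Quotient.mk
          (p := (D j₀.succ).comap (D j₀.castSucc).subtype) ⟨τ b, hmem⟩ = 0 := by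
        rw [Submodule.Quotient.mk_eq_zero]
        exact hlast j₀.succ hb
      have : b j₀ = 0 := by rw [← hmk, hzero']
      have hj₀T : j₀ ∈ T := T.min'_mem hTne
      rw [hT, Finset.mem_filter] at hj₀T
      exact hj₀T.2 this
    have hmapsub : ∀ b c : (j : Fin R) → chainQuot D j, τ (b - c) = τ b - τ c :=
      fun b c => τ.map_sub b c
    have hinj : Function.Injective Φ := by
      intro x y hxy
      have hcomp : ∀ ν, (x.1 ν : Fin n → GaloisField p (2 * m)) +
          τ (fun j => (x.2 j : Fin N → chainQuot D j) ν) =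
          (y.1 ν : Fin n → GaloisField p (2 * m)) +
          τ (fun j => (y.2 j : Fin N → chainQuot D j) ν) := by
        intro ν
        rw [← hΦ x ν, ← hΦ y ν, hxy]
      have hb0 : ∀ ν, (fun j => (x.2 j : Fin N → chainQuot D j) ν) =
          (fun j => (y.2 j : Fin N → chainQuot D j) ν) := by
        intro ν
        have hsub : (fun j => (x.2 j : Fin N → chainQuot D j) ν) -
            (fun j => (y.2 j : Fin N → chainQuot D j) ν) = 0 := by
          apply hkey
          rw [hmapsub]
          have h2 : τ (fun j => (x.2 j : Fin N → chainQuot D j) ν) -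
              τ (fun j => (y.2 j : Fin N → chainQuot D j) ν) =
              (y.1 ν : Fin n → GaloisField p (2 * m)) -
              (x.1 ν : Fin n → GaloisField p (2 * m)) := by
            linear_combination (norm := abel) hcomp ν
          rw [h2]
          exact sub_mem (y.1 ν).2 (x.1 ν).2
        exact sub_eq_zero.mp hsub
      have hx2 : x.2 = y.2 := by
        funext j
        apply Subtype.ext
        funext ν
        exact congrFun (hb0 ν) j
      have hx1 : x.1 = y.1 := by
        funext ν
        apply Subtype.ext
        have := hcomp ν
        rw [hb0 ν] at this
        exact add_right_cancel this
      exact Prod.ext hx1 hx2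
    have hcongr := Nat.card_congr (LinearEquiv.ofInjective Φ hinj).toEquiv.symm
    rw [hcongr, Nat.card_prod, Nat.card_fun, Nat.card_pi, Nat.card_eq_fintype_card (α := Fin N),
      Fintype.card_fin, mul_comm]
  · -- (iv)
    rintro v ⟨x, rfl⟩ hv0
    by_cases h0 : x.2 = 0
    · -- all outer words are zero
      have hΦx : ∀ ν, Φ x ν = (x.1 ν : Fin n → GaloisField p (2 * m)) := by
        intro ν
        rw [hΦ x ν, h0, hzero ν, map_zero, add_zero]
      obtain ⟨ν₀, hν₀⟩ := Function.ne_iff.mp hv0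
      have hc0 : (x.1 ν₀ : Fin n → GaloisField p (2 * m)) ≠ 0 := by
        rw [← hΦx ν₀]; exact hν₀
      have hd := hwt (Fin.last R) _ (x.1 ν₀).2 hc0
      have hd' : d (Fin.last R) ≤ Nat.card {i : Fin n | Φ x ν₀ i ≠ 0} := by
        rw [hΦx ν₀]; exact hd
      have hsum : Nat.card {i : Fin n | Φ x ν₀ i ≠ 0} ≤
          ∑ ν, Nat.card {i : Fin n | Φ x ν i ≠ 0} :=
        Finset.single_le_sum (f := fun ν => Nat.card {i : Fin n | Φ x ν i ≠ 0})
          (fun _ _ => Nat.zero_le _) (Finset.mem_univ ν₀)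
      exact le_trans (min_le_left _ _) (Nat.cast_le.mpr (le_trans hd' hsum))
    · -- some outer word is nonzero
      obtain ⟨j₁, hj₁⟩ := Function.ne_iff.mp h0
      set T : Finset (Fin R) := Finset.univ.filter (fun j => x.2 j ≠ 0) with hT
      have hTne : T.Nonempty := ⟨j₁, Finset.mem_filter.mpr ⟨Finset.mem_univ _, hj₁⟩⟩
      set j₀ := T.min' hTne with hj₀
      have hminT : ∀ j' : Fin R, j' < j₀ → x.2 j' = 0 := by
        intro j' hj'
        by_contra hne
        exact absurd (T.min'_le j' (by simp [hT, hne])) (not_le.mpr hj')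
      set b : Fin N → (j : Fin R) → chainQuot D j :=
        fun ν j => (x.2 j : Fin N → chainQuot D j) ν with hb
      have hblow : ∀ ν, ∀ j' : Fin R, j' < j₀ → b ν j' = 0 := by
        intro ν j' hj'
        rw [hb]
        simp only [hminT j' hj']
        rfl
      have Hτ : ∀ ν, ∃ h : τ (b ν) ∈ D j₀.castSucc,
          Submodule.Quotient.mk (p := (D j₀.succ).comap (D j₀.castSucc).subtype)
            ⟨τ (b ν), h⟩ = b ν j₀ := fun ν => hτ j₀ (b ν) (hblow ν)
      -- the set of nonzero outer positions
      set S : Finset (Fin N) :=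
        Finset.univ.filter (fun ν => (x.2 j₀ : Fin N → chainQuot D j₀) ν ≠ 0) with hS
      have hScard : δ j₀ ≤ S.card := by
        have h1 := hA j₀ _ (x.2 j₀).2 (fun h => hj₁ (by
          have := hminT  -- dummy
          exact absurd (Subtype.ext h : x.2 j₀ = 0) (by
            have hj₀T : j₀ ∈ T := T.min'_mem hTne
            rw [hT, Finset.mem_filter] at hj₀T
            exact hj₀T.2)))
        have h2 : Nat.card {ν : Fin N | (x.2 j₀ : Fin N → chainQuot D j₀) ν ≠ 0} =
            S.card := by
          rw [Nat.card_eq_fintype_card, hS]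
          exact Fintype.card_subtype _
        omega
      have hwtS : ∀ ν ∈ S, d j₀.castSucc ≤ Nat.card {i : Fin n | Φ x ν i ≠ 0} := by
        intro ν hνS
        obtain ⟨hmem, hmk⟩ := Hτ ν
        have hcν : (x.1 ν : Fin n → GaloisField p (2 * m)) ∈ D j₀.castSucc :=
          hlast j₀.castSucc (x.1 ν).2
        have hmem' : Φ x ν ∈ D j₀.castSucc := by
          rw [hΦ x ν]; exact add_mem hcν hmem
        have heq : (⟨Φ x ν, hmem'⟩ : D j₀.castSucc) =
            ⟨(x.1 ν : Fin n → GaloisField p (2 * m)), hcν⟩ + ⟨τ (b ν), hmem⟩ :=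
          Subtype.ext (hΦ x ν)
        have hmkc : Submodule.Quotient.mk
            (p := (D j₀.succ).comap (D j₀.castSucc).subtype)
            (⟨(x.1 ν : Fin n → GaloisField p (2 * m)), hcν⟩ : D j₀.castSucc) = 0 := by
          rw [Submodule.Quotient.mk_eq_zero]
          exact hlast j₀.succ (x.1 ν).2
        have hmkv : Submodule.Quotient.mk
            (p := (D j₀.succ).comap (D j₀.castSucc).subtype)
            (⟨Φ x ν, hmem'⟩ : D j₀.castSucc) = b ν j₀ := by
          rw [heq, Submodule.Quotient.mk_add, hmkc, hmk, zero_add]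
        have hbν : b ν j₀ ≠ 0 := by
          rw [hS, Finset.mem_filter] at hνS
          exact hνS.2
        have hne : Φ x ν ≠ 0 := by
          intro h
          apply hbν
          rw [← hmkv]
          have : (⟨Φ x ν, hmem'⟩ : D j₀.castSucc) = 0 := Subtype.ext h
          rw [this]
          rfl
        exact hwt j₀.castSucc _ hmem' hne
      have hchain2 : (δ j₀ * d j₀.castSucc : ℕ) ≤
          ∑ ν, Nat.card {i : Fin n | Φ x ν i ≠ 0} := by
        calc (δ j₀ * d j₀.castSucc : ℕ) ≤ S.card * d j₀.castSucc :=
              Nat.mul_le_mul_right _ hScard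
          _ = ∑ _ν ∈ S, d j₀.castSucc := by rw [Finset.sum_const, smul_eq_mul]
          _ ≤ ∑ ν ∈ S, Nat.card {i : Fin n | Φ x ν i ≠ 0} := Finset.sum_le_sum hwtS
          _ ≤ ∑ ν, Nat.card {i : Fin n | Φ x ν i ≠ 0} :=
              Finset.sum_le_sum_of_subset (Finset.subset_univ S)
      refine le_trans (min_le_right _ _) (le_trans (Finset.inf_le (Finset.mem_univ j₀)) ?_)
      exact Nat.cast_le.mpr hchain2
end

section
/- Let n, K, d, q, s be natural numbers with 1 ≤ s < q. If there exists a code C ⊆ (Fin n → Fin q) with |C| = K such that any two distinct codewords are at Hamming distance at least d, then there exists a code C′ ⊆ (Fin n → Fin s) such that any two distinct codewords of C′ are at Hamming distance at least d and |C′| · q^n ≥ K · s^n (i.e. |C′| ≥ K·(s/q)^n). -/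
/-!
Embed `Fin s` into `Fin q` and, for a shift `v ∈ (Fin q)ⁿ`, keep the words `y ∈ (Fin s)ⁿ` with
`y + v ∈ C`. The map `y ↦ y + v` is injective in each coordinate, so it preserves Hamming distance
and the kept words form a code of minimum distance at least `d`. Each word `y` lands in `C` for
exactly `K` of the `qⁿ` shifts, so on average over `v` one keeps `K sⁿ / qⁿ` words, and the best
shift does at least as well.
-/

open Finset Function

theorem Finset.sum_card_filter_add_mem {G α : Type*} [AddGroup G] [Fintype G] [DecidableEq G]
    [Fintype α] (e : α → G) (C : Finset G) :
    ∑ v : G, #{a | e a + v ∈ C} = Fintype.card α * #C := by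
  have hfiber (a : α) : #{v | e a + v ∈ C} = #C :=
    card_equiv (Equiv.addLeft (e a)) (by simp)
  simp only [card_filter]
  rw [sum_comm]
  simp only [← card_filter, hfiber, sum_const, card_univ, smul_eq_mul]

theorem exists_natCard_mul_natCard_le_natCard_preimage_add_mul {G α : Type*} [AddGroup G]
    [Finite G] [Finite α] (e : α → G) (C : Set G) :
    ∃ v : G, Nat.card α * Nat.card C ≤ Nat.card ((e · + v) ⁻¹' C) * Nat.card G := by
  classical
  have := Fintype.ofFinite G
  have := Fintype.ofFinite α
  obtain ⟨v, -, hv⟩ := exists_le_of_sum_le univ_nonempty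
    (f := fun _ => Fintype.card α * #C.toFinset)
    (g := fun v => #{a | e a + v ∈ C.toFinset} * Fintype.card G)
    (by rw [sum_const, card_univ, smul_eq_mul, ← sum_mul, sum_card_filter_add_mem, mul_comm])
  refine ⟨v, ?_⟩
  simpa [Nat.card_eq_fintype_card, Fintype.card_subtype, Set.toFinset_card] using hv

theorem Set.Pairwise.preimage {α β : Type*} {r : β → β → Prop} {s : Set β} (hs : s.Pairwise r)
    {f : α → β} (hf : Injective f) : (f ⁻¹' s).Pairwise (r on f) :=
  fun _ hx _ hy hxy => hs hx hy (hf.ne hxy)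

theorem Set.Pairwise.preimage_piMap_le_hammingDist {ι : Type*} [Fintype ι] {β γ : ι → Type*}
    [∀ i, DecidableEq (β i)] [∀ i, DecidableEq (γ i)] {C : Set (∀ i, γ i)} {d : ℕ}
    (hC : C.Pairwise (d ≤ hammingDist · ·)) {f : ∀ i, β i → γ i} (hf : ∀ i, Injective (f i)) :
    (Pi.map f ⁻¹' C).Pairwise (d ≤ hammingDist · ·) :=
  (hC.preimage (Injective.piMap hf)).mono' fun _ _ h => h.trans_eq (hammingDist_comp f hf)

theorem code_over_subalphabet_general
    (n K d q s : ℕ) (hsq : s < q)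
    (C : Set (Fin n → Fin q)) (hK : Nat.card C = K)
    (hd : ∀ x ∈ C, ∀ y ∈ C, x ≠ y → d ≤ hammingDist x y) :
    ∃ C' : Set (Fin n → Fin s),
      (∀ x ∈ C', ∀ y ∈ C', x ≠ y → d ≤ hammingDist x y) ∧
      K * s ^ n ≤ Nat.card C' * q ^ n := by
  have : NeZero q := ⟨by omega⟩
  obtain ⟨v, hv⟩ := exists_natCard_mul_natCard_le_natCard_preimage_add_mul
    (Pi.map fun _ => Fin.castLE hsq.le) C
  refine ⟨Pi.map (fun i a => Fin.castLE hsq.le a + v i) ⁻¹' C,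
    Set.Pairwise.preimage_piMap_le_hammingDist hd
      fun i => (add_left_injective (v i)).comp (Fin.castLE_injective _), ?_⟩
  calc K * s ^ n = Nat.card (Fin n → Fin s) * Nat.card C := by simp [hK, mul_comm]
    _ ≤ _ := hv
    _ = _ := by rw [Nat.card_fun, Nat.card_fin, Nat.card_fin]; rfl

/-- **Codes over a smaller alphabet (Dumer, Lemma 3.1).**
If there is an `(n, K, d)_q` code, then for any `1 ≤ s < q` there is a length-`n` code over an
alphabet of size `s` with minimum distance at least `d` and at least `K·(s/q)^n` codewords,
i.e. `|C'| · q^n ≥ K · s^n`. -/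
theorem code_over_subalphabet
    (n K d q s : ℕ) (hs : 1 ≤ s) (hsq : s < q)
    (C : Set (Fin n → Fin q)) (hK : Nat.card C = K)
    (hd : ∀ x ∈ C, ∀ y ∈ C, x ≠ y → d ≤ hammingDist x y) :
    ∃ C' : Set (Fin n → Fin s),
      (∀ x ∈ C', ∀ y ∈ C', x ≠ y → d ≤ hammingDist x y) ∧
      K * s ^ n ≤ Nat.card C' * q ^ n :=
  code_over_subalphabet_general n K d q s hsq C hK hd
end

section
/- There exists an F₂-linear subspace C of GF(4)^1365 with dim_{F₂} C = 12 such that C ⊆ C^⊥ with respect to the trace-Hermitian inner product and every nonzero vector of C^⊥ has Hamming weight at least 3. (This is the classical description of a pure quantum stabilizer code [[1365,1353,3]]₂, which is a perfect quantum code: 2^1353 · (1 + 3·1365) = 2^1365.) -/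
/-!
Let `K = GF(4⁶)` and let `xᵢ ∈ Kˣ` run over one representative of each of the
`1365 = (4⁶ - 1) / 3` points of the projective space `P(K)` over `𝔽₄`. The code is the
`𝔽₄`-simplex code `C = {(Tr(α xᵢ))ᵢ : α ∈ K}`, with `Tr = Tr_{K/𝔽₄}`. It has `𝔽₂`-dimension 12:
if `Tr(α xᵢ) = 0` for all `i`, then `Tr(α y) = 0` for every `y ∈ K` (each `y ≠ 0` is an
`𝔽₄`-multiple of some `xᵢ`), so `α = 0` because `Tr` is onto.

With `h(u, v) = ∑ uᵢ vᵢ²`, the trace-Hermitian product is `h + h²`, and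
`h((Tr(α xᵢ))ᵢ, v) = Tr(α S(v))` for the syndrome `S(v) = ∑ vᵢ² xᵢ ∈ K`. Since `a + a²` does not
vanish on all of `𝔽₄` and `Tr` is onto, `v ∈ C^⊥` exactly when `S(v) = 0`. For a codeword `v`,
`S(v)` is a combination of power sums `∑ xᵢ ^ (2·4ʲ + 1)`; the exponent is divisible by
`3 = |𝔽₄ˣ|` and `3 = 1` in `K`, so such a sum equals `∑_{u ∈ Kˣ} u ^ (2·4ʲ + 1)`, which vanishes since the exponent
is not divisible by `|Kˣ|`. Finally, `S(v) = 0` with `v` of weight one or two would make some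
`xᵢ` zero or two of them `𝔽₄`-proportional.
-/

open Finset Module

local notation "𝔽₄" => GaloisField 2 2

namespace QuantumHamming

noncomputable instance : Fintype 𝔽₄ˣ := Fintype.ofFinite _

lemma natCard_eq_four : Nat.card 𝔽₄ = 4 := GaloisField.card 2 2 two_ne_zero

lemma pow_four_eq_self (a : 𝔽₄) : a ^ 4 = a := by
  have := Fintype.ofFinite 𝔽₄
  have h := FiniteField.pow_card a
  rwa [Fintype.card_eq_nat_card, natCard_eq_four] at h

lemma units_pow_three (c : 𝔽₄ˣ) : c ^ 3 = 1 := by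
  rw [← pow_card_eq_one' (x := c), Nat.card_units, natCard_eq_four]

lemma mul_sq_add_sq_mul (u v : 𝔽₄) : u * v ^ 2 + u ^ 2 * v = u * v ^ 2 + (u * v ^ 2) ^ 2 := by
  rw [mul_pow, ← pow_mul, pow_four_eq_self]

lemma exists_add_sq_ne_zero : ∃ a : 𝔽₄, a + a ^ 2 ≠ 0 := by
  obtain ⟨a, ha⟩ := Algebra.trace_surjective (ZMod 2) 𝔽₄ 1
  -- `a + a ^ 2` is the absolute trace of `a`
  have h := FiniteField.algebraMap_trace_eq_sum_pow (ZMod 2) 𝔽₄ a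
  rw [ha, GaloisField.finrank 2 two_ne_zero, Nat.card_zmod] at h
  simp only [map_one, sum_range_succ, range_one, sum_singleton, pow_zero, pow_one] at h
  exact ⟨a, h ▸ one_ne_zero⟩

noncomputable def traceHermitian {ι : Type*} [Fintype ι] (u v : ι → 𝔽₄) : 𝔽₄ :=
  ∑ i, (u i * v i ^ 2 + u i ^ 2 * v i)

lemma traceHermitian_eq_add_sq {ι : Type*} [Fintype ι] (u v : ι → 𝔽₄) :
    traceHermitian u v = ∑ i, u i * v i ^ 2 + (∑ i, u i * v i ^ 2) ^ 2 := by
  simp_rw [traceHermitian, mul_sq_add_sq_mul, sum_add_distrib, sum_pow_char]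

lemma three_dvd_two_mul_four_pow_add_one (j : ℕ) : 3 ∣ 2 * 4 ^ j + 1 := by
  have := Nat.pow_mod 4 j 3
  norm_num at this
  omega

lemma not_four_pow_sub_one_dvd {m j : ℕ} (hm : 2 ≤ m) (hj : j < m) :
    ¬ 4 ^ m - 1 ∣ 2 * 4 ^ j + 1 := by
  obtain ⟨l, rfl⟩ := Nat.exists_eq_add_of_le hm
  have hj' : 4 ^ j ≤ 4 ^ (l + 1) := Nat.pow_le_pow_right (by norm_num) (by omega)
  have hl : 4 ≤ 4 ^ (l + 1) := Nat.le_self_pow (by omega) 4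
  refine Nat.not_dvd_of_pos_of_lt (by omega) ?_
  rw [show 2 + l = (l + 1) + 1 by omega, pow_succ]
  omega

variable {K : Type*} [Field K] [Algebra 𝔽₄ K]

instance : CharP K 2 := charP_of_injective_algebraMap (algebraMap 𝔽₄ K).injective 2

/-- `x` lists one point of each `𝔽₄`-line of `K`, i.e. the points of the projective space
`P(K)` over `𝔽₄`. -/
def IsProjectiveFrame {ι : Type*} (x : ι → Kˣ) : Prop :=
  Function.Bijective fun p : ι × 𝔽₄ˣ => Units.map (algebraMap 𝔽₄ K : 𝔽₄ →* K) p.2 * x p.1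

namespace IsProjectiveFrame

variable {ι : Type*} {x : ι → Kˣ}

lemma exists_eq_smul (hx : IsProjectiveFrame x) (u : Kˣ) :
    ∃ i, ∃ c : 𝔽₄ˣ, (u : K) = (c : 𝔽₄) • (x i : K) := by
  obtain ⟨⟨i, c⟩, hic⟩ := hx.2 u
  exact ⟨i, c, by rw [← hic, Algebra.smul_def]; rfl⟩

lemma eq_of_smul_eq (hx : IsProjectiveFrame x) {i j : ι} {c : 𝔽₄ˣ}
    (h : (c : 𝔽₄) • (x i : K) = x j) : i = j := by
  have h' : Units.map (algebraMap 𝔽₄ K : 𝔽₄ →* K) c * x i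
      = Units.map (algebraMap 𝔽₄ K : 𝔽₄ →* K) 1 * x j := by
    ext
    simpa [Algebra.smul_def] using h
  exact congrArg Prod.fst (hx.1 (a₁ := (i, c)) (a₂ := (j, 1)) h')

lemma sum_units [Fintype ι] [Fintype K] [DecidableEq K] (hx : IsProjectiveFrame x)
    (f : K → K) : ∑ u : Kˣ, f u = ∑ i, ∑ c : 𝔽₄ˣ, f ((c : 𝔽₄) • (x i : K)) := by
  rw [← Fintype.sum_prod_type']
  exact (Fintype.sum_bijective _ hx _ _ fun p => by simp [Algebra.smul_def]).symm

lemma sum_pow_eq_zero [Fintype ι] [Fintype K] (hx : IsProjectiveFrame x) {e : ℕ} (h3 : 3 ∣ e)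
    (he : ¬ Fintype.card K - 1 ∣ e) : ∑ i, (x i : K) ^ e = 0 := by
  classical
  have h := FiniteField.sum_pow_units K e
  rw [if_neg he, hx.sum_units (· ^ e)] at h
  obtain ⟨k, rfl⟩ := h3
  have hcard : ((4 - 1 : ℕ) : K) = 1 := by
    norm_num
    linear_combination CharTwo.two_eq_zero (R := K)
  have hfiber (y : K) : ∑ c : 𝔽₄ˣ, ((c : 𝔽₄) • y) ^ (3 * k) = y ^ (3 * k) := by
    simp_rw [smul_pow, pow_mul, ← Units.val_pow_eq_pow_val, units_pow_three, one_pow,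
      Units.val_one, one_smul, sum_const, card_univ, Fintype.card_eq_nat_card, Nat.card_units,
      natCard_eq_four, nsmul_eq_mul, hcard, one_mul]
  simpa only [hfiber] using h

end IsProjectiveFrame

lemma exists_isProjectiveFrame [Finite K] {n : ℕ} (hn : Nat.card K = 3 * n + 1) :
    ∃ x : Fin n → Kˣ, IsProjectiveFrame x := by
  set H := (Units.map (algebraMap 𝔽₄ K : 𝔽₄ →* K)).range
  have hH : Nat.card H = 3 := by
    refine (Nat.card_congr (MonoidHom.ofInjective
      (Units.map_injective (algebraMap 𝔽₄ K).injective)).toEquiv).symm.trans ?_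
    rw [Nat.card_units, natCard_eq_four]
  have hQ : Nat.card (Kˣ ⧸ H) = n := by
    have h := Subgroup.card_eq_card_quotient_mul_card_subgroup H
    rw [Nat.card_units, hn, hH] at h
    omega
  set e := (Finite.equivFinOfCardEq hQ).symm
  refine ⟨fun i => (e i).out, Function.Surjective.bijective_of_nat_card_le ?_ ?_⟩
  · intro u
    obtain ⟨⟨_, c, rfl⟩, hc⟩ := QuotientGroup.mk_out_eq_mul H u
    refine ⟨(e.symm u, c⁻¹), ?_⟩
    simp [hc, mul_comm]
  · rw [Nat.card_prod, Nat.card_eq_fintype_card (α := Fin n), Fintype.card_fin, Nat.card_units,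
      Nat.card_units, natCard_eq_four, hn]
    omega

section SimplexCode

variable {ι : Type*} (x : ι → Kˣ)

noncomputable def simplexEncoding : K →ₗ[𝔽₄] ι → 𝔽₄ :=
  LinearMap.pi fun i => (Algebra.trace 𝔽₄ K).comp (LinearMap.mulRight 𝔽₄ (x i : K))

lemma simplexEncoding_apply (α : K) (i : ι) :
    simplexEncoding x α i = Algebra.trace 𝔽₄ K (α * x i) :=
  rfl

noncomputable def syndrome [Fintype ι] (v : ι → 𝔽₄) : K := ∑ i, v i ^ 2 • (x i : K)

lemma traceHermitian_simplexEncoding [Fintype ι] (α : K) (v : ι → 𝔽₄) :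
    traceHermitian (simplexEncoding x α) v =
      Algebra.trace 𝔽₄ K (α * syndrome x v) + Algebra.trace 𝔽₄ K (α * syndrome x v) ^ 2 := by
  have h : ∑ i, simplexEncoding x α i * v i ^ 2 = Algebra.trace 𝔽₄ K (α * syndrome x v) := by
    simp_rw [syndrome, mul_sum, mul_smul_comm, map_sum, map_smul, smul_eq_mul,
      simplexEncoding_apply, mul_comm]
  rw [traceHermitian_eq_add_sq, h]

lemma forall_traceHermitian_simplexEncoding_eq_zero_iff [Fintype ι] [Finite K]
    (v : ι → 𝔽₄) : (∀ α, traceHermitian (simplexEncoding x α) v = 0) ↔ syndrome x v = 0 := by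
  simp_rw [traceHermitian_simplexEncoding]
  refine ⟨fun h => ?_, fun h α => by simp [h]⟩
  by_contra hS
  obtain ⟨a, ha⟩ := exists_add_sq_ne_zero
  obtain ⟨y, hy⟩ := Algebra.trace_surjective 𝔽₄ K a
  have := h (y * (syndrome x v)⁻¹)
  rw [inv_mul_cancel_right₀ hS, hy] at this
  exact ha this

lemma syndrome_simplexEncoding [Fintype ι] [Finite K] (hx : IsProjectiveFrame x)
    (hK : 2 ≤ finrank 𝔽₄ K) (β : K) : syndrome x (simplexEncoding x β) = 0 := by
  have := Fintype.ofFinite K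
  have hpow (j : ℕ) (hj : j < finrank 𝔽₄ K) : ∑ i, (x i : K) ^ (2 * 4 ^ j + 1) = 0 := by
    refine hx.sum_pow_eq_zero (three_dvd_two_mul_four_pow_add_one j) ?_
    rw [Fintype.card_eq_nat_card, Module.natCard_eq_pow_finrank (K := 𝔽₄), natCard_eq_four]
    exact not_four_pow_sub_one_dvd hK hj
  have hterm (i : ι) : simplexEncoding x β i ^ 2 • (x i : K) =
      ∑ j ∈ range (finrank 𝔽₄ K), β ^ (2 * 4 ^ j) * (x i : K) ^ (2 * 4 ^ j + 1) := by
    rw [Algebra.smul_def, map_pow, simplexEncoding_apply,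
      FiniteField.algebraMap_trace_eq_sum_pow, natCard_eq_four, sum_pow_char, sum_mul]
    refine sum_congr rfl fun j _ => ?_
    rw [← pow_mul, mul_pow, pow_succ]
    ring
  rw [syndrome, Fintype.sum_congr _ _ hterm, sum_comm]
  refine sum_eq_zero fun j hj => ?_
  rw [← mul_sum, hpow j (mem_range.1 hj), mul_zero]

lemma simplexEncoding_injective [Finite K] (hx : IsProjectiveFrame x) :
    Function.Injective (simplexEncoding x) := by
  rw [← LinearMap.ker_eq_bot, LinearMap.ker_eq_bot']
  intro α hα
  by_contra hα0
  obtain ⟨y, hy⟩ := Algebra.trace_surjective 𝔽₄ K 1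
  have hy0 : y ≠ 0 := by
    rintro rfl
    simp at hy
  obtain ⟨i, c, hic⟩ := hx.exists_eq_smul (Units.mk0 (α⁻¹ * y) (by simp [hα0, hy0]))
  rw [Units.val_mk0] at hic
  have hαi : Algebra.trace 𝔽₄ K (α * x i) = 0 := congrFun hα i
  have : Algebra.trace 𝔽₄ K (α * (α⁻¹ * y)) = 0 := by
    rw [hic, mul_smul_comm, map_smul, hαi, smul_zero]
  rw [mul_inv_cancel_left₀ hα0, hy] at this
  exact one_ne_zero this

lemma three_le_card_support [Fintype ι] (hx : IsProjectiveFrame x) {v : ι → 𝔽₄}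
    (hv : syndrome x v = 0) (hv0 : v ≠ 0) : 3 ≤ Nat.card {i | v i ≠ 0} := by
  have hterm (i : ι) (hi : v i ≠ 0) : v i ^ 2 • (x i : K) ≠ 0 :=
    smul_ne_zero (pow_ne_zero 2 hi) (x i).ne_zero
  obtain ⟨i, hi⟩ : ∃ i, v i ≠ 0 := by
    by_contra! h
    exact hv0 (funext h)
  obtain ⟨j, hji, hj⟩ : ∃ j, j ≠ i ∧ v j ≠ 0 := by
    by_contra! h
    rw [syndrome, Fintype.sum_eq_single i fun k hk => by
      rw [h k hk, zero_pow two_ne_zero, zero_smul]] at hv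
    exact hterm i hi hv
  obtain ⟨k, hki, hkj, hk⟩ : ∃ k, k ≠ i ∧ k ≠ j ∧ v k ≠ 0 := by
    by_contra! h
    rw [syndrome, Fintype.sum_eq_add i j hji.symm fun k hk => by
      rw [h k hk.1 hk.2, zero_pow two_ne_zero, zero_smul]] at hv
    have hij : v i ^ 2 • (x i : K) = v j ^ 2 • (x j : K) :=
      (eq_neg_of_add_eq_zero_left hv).trans (CharTwo.neg_eq _)
    refine hji (hx.eq_of_smul_eq
      (c := Units.mk0 ((v j ^ 2)⁻¹ * v i ^ 2) (by simp [hi, hj])) ?_).symm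
    rw [Units.val_mk0, mul_smul, hij, inv_smul_smul₀ (pow_ne_zero 2 hj)]
  have := (Set.two_lt_ncard_iff (s := {i | v i ≠ 0}) (Set.toFinite _)).2
    ⟨i, j, k, hi, hj, hk, hji.symm, hki.symm, hkj.symm⟩
  rw [Nat.card_coe_set_eq]
  omega

noncomputable def simplexCode [Module (ZMod 2) K] : Submodule (ZMod 2) (ι → 𝔽₄) :=
  LinearMap.range ((simplexEncoding x).toAddMonoidHom.toZModLinearMap 2)

lemma finrank_simplexCode [Finite K] [Module (ZMod 2) K] (hx : IsProjectiveFrame x) :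
    finrank (ZMod 2) (simplexCode x) = finrank (ZMod 2) K :=
  LinearMap.finrank_range_of_inj (simplexEncoding_injective x hx)

end SimplexCode

end QuantumHamming

open QuantumHamming

/-- **The perfect quantum code `[[1365,1353,3]]₂`.**
There is an `𝔽₂`-linear subspace `C ⊆ GF(4)^1365` of `𝔽₂`-dimension `12` that is
self-orthogonal with respect to the trace-Hermitian inner product
`⟨u,v⟩ = ∑ i, (uᵢvᵢ² + uᵢ²vᵢ)`, and such that every nonzero vector of its trace-Hermitian dual
has Hamming weight at least `3`. -/
theorem exists_perfect_code_1365_1353_3 :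
    ∃ C : Submodule (ZMod 2) (Fin 1365 → GaloisField 2 2),
      Module.finrank (ZMod 2) C = 12 ∧
      (∀ u ∈ C, ∀ v ∈ C, ∑ i, (u i * v i ^ 2 + u i ^ 2 * v i) = 0) ∧
      (∀ v : Fin 1365 → GaloisField 2 2,
        (∀ u ∈ C, ∑ i, (u i * v i ^ 2 + u i ^ 2 * v i) = 0) →
        v ≠ 0 → 3 ≤ Nat.card {i : Fin 1365 | v i ≠ 0}) := by
  obtain ⟨f⟩ := FiniteField.nonempty_algHom_of_finrank_dvd (F := ZMod 2) (K := 𝔽₄)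
    (L := GaloisField 2 12) (by simp [GaloisField.finrank])
  let _ : Algebra 𝔽₄ (GaloisField 2 12) := f.toAlgebra
  have hcard : Nat.card (GaloisField 2 12) = 4 ^ 6 := GaloisField.card 2 12 (by norm_num)
  have hdeg : 2 ≤ finrank 𝔽₄ (GaloisField 2 12) := by
    rw [Module.natCard_eq_pow_finrank (K := 𝔽₄), natCard_eq_four] at hcard
    rw [Nat.pow_right_injective (by norm_num : 2 ≤ 4) hcard]
    norm_num
  obtain ⟨x, hx⟩ :=
    exists_isProjectiveFrame (K := GaloisField 2 12) (n := 1365) (by norm_num [hcard])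
  have hdual (v : Fin 1365 → 𝔽₄) := forall_traceHermitian_simplexEncoding_eq_zero_iff x v
  refine ⟨simplexCode x, ?_, ?_, ?_⟩
  · rw [finrank_simplexCode x hx, GaloisField.finrank 2 (by norm_num)]
  · rintro _ ⟨α, rfl⟩ _ ⟨β, rfl⟩
    exact (hdual _).2 (syndrome_simplexEncoding x hx hdeg β) α
  · intro v hv hv0
    exact three_le_card_support x hx ((hdual v).1 fun α => hv _ ⟨α, rfl⟩) hv0
end

section
/- There exists a code C ⊆ (Fin 18 → Fin 16) such that any two distinct codewords of C are at Hamming distance at least 3 and |C| · 17² ≥ 16^18 (i.e. |C| ≥ ⌈16^18/289⌉). (Such a nonlinear (18, ⌈16^18/17²⌉, 3) code over an alphabet of size 16 is obtained from the linear MDS code [18,16,3] over GF(17) by restriction to a sub-alphabet of size 16.) -/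
/-- First row of the parity-check matrix of the `[18,16,3]` MDS code over `GF(17)`. -/
def col1 (i : Fin 18) : ZMod 17 := if i.val = 17 then 0 else 1

/-- Second row of the parity-check matrix. -/
def col2 (i : Fin 18) : ZMod 17 := if i.val = 17 then 1 else (i.val : ZMod 17)

lemma det_ne : ∀ a b : Fin 18, a ≠ b → col1 a * col2 b ≠ col1 b * col2 a := by decide

lemma col_ne_zero : ∀ a : Fin 18, ¬ (col1 a = 0 ∧ col2 a = 0) := by decide

instance : Fact (Nat.Prime 17) := ⟨by norm_num⟩

lemma castinj : ∀ a b : Fin 16, ((a.val : ZMod 17) = (b.val : ZMod 17)) → a = b := by decide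

/-- Syndrome of a word. -/
def syn (x : Fin 18 → Fin 16) : ZMod 17 × ZMod 17 :=
  (∑ i, col1 i * ((x i).val : ZMod 17), ∑ i, col2 i * ((x i).val : ZMod 17))

lemma key (a b : Fin 18) (hab : a ≠ b) (va vb : ZMod 17)
    (h1 : col1 a * va + col1 b * vb = 0) (h2 : col2 a * va + col2 b * vb = 0) :
    va = 0 ∧ vb = 0 := by
  have hd : col1 a * col2 b - col1 b * col2 a ≠ 0 := sub_ne_zero.mpr (det_ne a b hab)
  have hd' : col1 b * col2 a - col1 a * col2 b ≠ 0 := sub_ne_zero.mpr (det_ne b a hab.symm)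
  constructor
  · have h : (col1 a * col2 b - col1 b * col2 a) * va = 0 := by
      linear_combination col2 b * h1 - col1 b * h2
    rcases mul_eq_zero.mp h with h | h
    · exact absurd h hd
    · exact h
  · have h : (col1 b * col2 a - col1 a * col2 b) * vb = 0 := by
      linear_combination col2 a * h1 - col1 a * h2
    rcases mul_eq_zero.mp h with h | h
    · exact absurd h (fun h => hd (by rw [sub_eq_zero] at h ⊢; exact h.symm))
    · exact h

/-- **A nonlinear `(18, ⌈16^18/17²⌉, 3)₁₆` code.**
There is a code of length `18` over an alphabet of size `16` with minimum Hamming distance at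
least `3` and `|C| · 17² ≥ 16^18` codewords (obtained from the MDS code `[18,16,3]` over
`GF(17)` by restriction to a sub-alphabet of size `16`). -/
theorem exists_code_18_16pow18div289_3 :
    ∃ C : Set (Fin 18 → Fin 16),
      (∀ x ∈ C, ∀ y ∈ C, x ≠ y → 3 ≤ hammingDist x y) ∧
      16 ^ 18 ≤ Nat.card C * 17 ^ 2 := by
  -- pigeonhole: some syndrome fiber is large
  have hcard : Fintype.card (ZMod 17 × ZMod 17) * (16 ^ 18 / 289) <
      Fintype.card (Fin 18 → Fin 16) := by
    simp only [Fintype.card_prod, ZMod.card, Fintype.card_fun, Fintype.card_fin]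
    norm_num
  obtain ⟨z, hz⟩ := Fintype.exists_lt_card_fiber_of_mul_lt_card syn hcard
  refine ⟨↑(Finset.univ.filter fun x => syn x = z), ?_, ?_⟩
  · intro x hx y hy hxy
    by_contra hlt
    push_neg at hlt
    -- difference vector
    set v : Fin 18 → ZMod 17 := fun i => ((x i).val : ZMod 17) - ((y i).val : ZMod 17) with hv
    have hsyn : syn x = syn y := by
      simp only [Finset.coe_filter, Set.mem_setOf_eq, Finset.mem_univ, true_and] at hx hy
      rw [hx, hy]
    have e1 : ∑ i, col1 i * v i = 0 := by
      have := congrArg Prod.fst hsyn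
      simp only [syn] at this
      rw [hv]
      simp only [mul_sub]
      rw [Finset.sum_sub_distrib, this, sub_self]
    have e2 : ∑ i, col2 i * v i = 0 := by
      have := congrArg Prod.snd hsyn
      simp only [syn] at this
      rw [hv]
      simp only [mul_sub]
      rw [Finset.sum_sub_distrib, this, sub_self]
    set s : Finset (Fin 18) := Finset.univ.filter (fun i => x i ≠ y i) with hs
    have hvz : ∀ i, i ∉ s → v i = 0 := by
      intro i hi
      simp only [hs, Finset.mem_filter, Finset.mem_univ, true_and, not_not] at hi
      simp [hv, hi]
    have e1' : ∑ i ∈ s, col1 i * v i = 0 :=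
      (Finset.sum_subset s.subset_univ (fun i _ hi => by rw [hvz i hi, mul_zero])).trans e1
    have e2' : ∑ i ∈ s, col2 i * v i = 0 :=
      (Finset.sum_subset s.subset_univ (fun i _ hi => by rw [hvz i hi, mul_zero])).trans e2
    have hscard : s.card ≤ 2 := by
      unfold hammingDist at hlt
      rw [hs]
      omega
    obtain ⟨k, hk⟩ := Function.ne_iff.mp hxy
    have hks : k ∈ s := by simp [hs, hk]
    have hvk : v k ≠ 0 := by
      intro h
      exact hk (castinj _ _ (sub_eq_zero.mp h))
    interval_cases hc : s.card
    · exact absurd hks (by simp [Finset.card_eq_zero.mp hc])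
    · obtain ⟨a, ha⟩ := Finset.card_eq_one.mp hc
      rw [ha, Finset.mem_singleton] at hks
      subst hks
      rw [ha, Finset.sum_singleton] at e1' e2'
      rcases mul_eq_zero.mp e1' with h | h
      · rcases mul_eq_zero.mp e2' with h2 | h2
        · exact col_ne_zero k ⟨h, h2⟩
        · exact hvk h2
      · exact hvk h
    · obtain ⟨a, b, hab, hab2⟩ := Finset.card_eq_two.mp hc
      rw [hab2, Finset.sum_pair hab] at e1' e2'
      obtain ⟨hva, hvb⟩ := key a b hab (v a) (v b) e1' e2'
      rw [hab2, Finset.mem_insert, Finset.mem_singleton] at hks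
      rcases hks with h | h <;> subst h
      · exact hvk hva
      · exact hvk hvb
  · have : (16 ^ 18 / 289 + 1) * 17 ^ 2 ≥ 16 ^ 18 := by norm_num
    rw [Nat.card_coe_set_eq, Set.ncard_coe_finset]
    calc 16 ^ 18 ≤ (16 ^ 18 / 289 + 1) * 17 ^ 2 := this
      _ ≤ (Finset.univ.filter fun x => syn x = z).card * 17 ^ 2 :=
        Nat.mul_le_mul_right _ (by omega)
end

section
/- There exist an F₂-linear subspace D of GF(4)^90 with dim_{F₂} D = 108 satisfying D^⊥ ⊆ D with respect to the trace-Hermitian inner product, and a finite set T ⊆ GF(4)^90 with |T| · 17² ≥ 16^18 such that the cosets t + D for t ∈ T are pairwise disjoint and any two distinct vectors in the union ⋃_{t∈T} (t + D) are at Hamming distance at least 3. (This is the classical union normalizer code of the nonadditive quantum code ((90, 2^{81.825}, 3))₂, whose dimension |T|·2^18 exceeds that of the best stabilizer code [[90,81,3]]₂.) -/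
/-!
`D` is the normalizer of eighteen disjoint copies of the five-qubit code `[[5,1,3]]`, i.e. the
kernel of the blockwise syndrome map `GF(4)^90 → (𝔽₂^4)^18`. That map is onto, so
`dim D = 180 - 72`, and the stabilizer generators placed in a single block lie in `D`, so
`D^⊥ ⊆ D`. Cosets of `D` are labelled by syndrome words, and `T` takes one representative for
each word of a code `C ⊆ (𝔽₂^4)^18` of minimum distance `3`: after embedding the alphabet `𝔽₂^4`
into `𝔽₁₇`, `C` is a fibre of the parity-check map whose `18` columns are the points of the
projective line over `𝔽₁₇`, any two of them independent, and the largest fibre has at least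
`16^18 / 17^2` elements. Two distinct vectors of the union either have the same syndrome word,
and then differ by a nonzero vector of `D`, which has weight `≥ 3` inside one block because the
five-qubit code has distance `3`; or their syndrome words differ in at least three blocks, each
of which contributes a nonzero coordinate.
-/

open Function Finset

section Hamming

variable {ι β κ F : Type*} [Fintype ι] [Fintype β] [Fintype κ] [DecidableEq F]

theorem natCard_setOf_ne_eq_hammingDist (x y : ι → F) :
    Nat.card {i | x i ≠ y i} = hammingDist x y := by
  simp [hammingDist, Nat.card_eq_fintype_card, Fintype.card_subtype]

variable [Zero F]

theorem hammingNorm_eq_sum_blocks (e : β × κ ≃ ι) (v : ι → F) :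
    hammingNorm v = ∑ b, hammingNorm fun k => v (e (b, k)) := by
  simp only [hammingNorm, card_filter]
  rw [← e.sum_comp, Fintype.sum_prod_type]

theorem hammingNorm_le_sum_hammingNorm (w : β → κ → F) :
    hammingNorm w ≤ ∑ b, hammingNorm (w b) := by
  rw [hammingNorm, card_filter]
  gcongr with b
  split_ifs with h
  · exact hammingNorm_pos_iff.2 h
  · exact Nat.zero_le _

theorem le_hammingNorm_of_linearIndepOn {K M : Type*} [Ring K] [DecidableEq K] [AddCommGroup M]
    [Module K M] (h : β → M) {d : ℕ} (hh : ∀ s : Finset β, s.card < d → LinearIndepOn K h s)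
    {x : β → K} (hx : ∑ b, x b • h b = 0) (hx0 : x ≠ 0) : d ≤ hammingNorm x := by
  by_contra! hlt
  have hsum : ∑ b with x b ≠ 0, x b • h b = 0 := by
    rw [sum_filter_of_ne fun b _ hb => ?_]
    · exact hx
    · exact fun hxb => hb (by rw [hxb, zero_smul])
  have := linearIndepOn_iff'.1 (hh _ hlt) _ x subset_rfl hsum
  exact hx0 (funext fun b => by_contra fun hb => hb (this b (by simpa using hb)))

end Hamming

section BlockSyndrome

variable {R ι β κ F A : Type*} [Semiring R] [AddCommMonoid F] [Module R F] [AddCommMonoid A]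
  [Module R A] (e : β × κ ≃ ι) (σ : (κ → F) →ₗ[R] A)

def blockSyndrome : (ι → F) →ₗ[R] (β → A) :=
  LinearMap.pi fun b => σ ∘ₗ LinearMap.funLeft R F fun k => e (b, k)

@[simp] theorem blockSyndrome_apply (v : ι → F) (b : β) :
    blockSyndrome e σ v b = σ fun k => v (e (b, k)) := rfl

theorem blockSyndrome_surjective (hσ : Surjective σ) : Surjective (blockSyndrome e σ) := by
  intro y
  choose w hw using fun b => hσ (y b)
  exact ⟨fun i => w (e.symm i).1 (e.symm i).2, funext fun b => by simp [hw]⟩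

theorem blockSyndrome_single [DecidableEq β] (b : β) (g : κ → F) :
    blockSyndrome e σ (fun i => (Pi.single b g : β → κ → F) (e.symm i).1 (e.symm i).2) =
      Pi.single b (σ g) := by
  funext b'
  rcases eq_or_ne b' b with rfl | hb
  · simp
  · simp only [blockSyndrome_apply, Equiv.symm_apply_apply, ne_eq, hb, not_false_eq_true,
      Pi.single_eq_of_ne]
    exact map_zero σ

end BlockSyndrome

theorem le_hammingDist_of_blockSyndrome_mem {R ι β κ F A : Type*} [Semiring R] [AddCommGroup F]
    [Module R F] [AddCommGroup A] [Module R A] [DecidableEq F] [DecidableEq A] [Fintype ι]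
    [Fintype β] [Fintype κ] (e : β × κ ≃ ι) (σ : (κ → F) →ₗ[R] A) {d : ℕ}
    (hσ : ∀ w, σ w = 0 → w ≠ 0 → d ≤ hammingNorm w) {C : Set (β → A)}
    (hC : ∀ c ∈ C, ∀ c' ∈ C, c ≠ c' → d ≤ hammingDist c c') {x y : ι → F}
    (hx : blockSyndrome e σ x ∈ C) (hy : blockSyndrome e σ y ∈ C) (hxy : x ≠ y) :
    d ≤ hammingDist x y := by
  rw [hammingDist_eq_hammingNorm, neg_add_eq_sub, hammingNorm_eq_sum_blocks e]
  by_cases hs : blockSyndrome e σ x = blockSyndrome e σ y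
  · obtain ⟨b, hb⟩ : ∃ b, (fun k => (y - x) (e (b, k))) ≠ 0 := by
      by_contra! h
      refine hxy (funext fun i => ?_)
      obtain ⟨⟨b, k⟩, rfl⟩ := e.surjective i
      exact (sub_eq_zero.1 (congrFun (h b) k)).symm
    have hsyn : blockSyndrome e σ (y - x) = 0 := by rw [map_sub, hs, sub_self]
    calc d ≤ hammingNorm fun k => (y - x) (e (b, k)) := hσ _ (congrFun hsyn b) hb
      _ ≤ _ := single_le_sum (f := fun b => hammingNorm fun k => (y - x) (e (b, k)))
          (fun _ _ => Nat.zero_le _) (mem_univ b)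
  · calc d ≤ hammingDist (blockSyndrome e σ x) (blockSyndrome e σ y) := hC _ hx _ hy hs
      _ = hammingNorm fun b => σ fun k => (y - x) (e (b, k)) := by
          rw [hammingDist_eq_hammingNorm, neg_add_eq_sub, ← map_sub]; rfl
      _ ≤ hammingNorm fun b k => (y - x) (e (b, k)) :=
          hammingNorm_comp_le_hammingNorm (fun _ => σ) fun _ => map_zero σ
      _ ≤ _ := hammingNorm_le_sum_hammingNorm _

theorem exists_card_pow_le_card_mul_of_linearIndepOn {A β K M : Type*} [Fintype A]
    [DecidableEq A] [Fintype β] [Ring K] [AddCommGroup M] [Module K M] [Fintype M]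
    (ψ : A ↪ K) (h : β → M) {d : ℕ} (hh : ∀ s : Finset β, s.card < d → LinearIndepOn K h s) :
    ∃ C : Finset (β → A), Fintype.card A ^ Fintype.card β ≤ C.card * Fintype.card M ∧
      ∀ c ∈ C, ∀ c' ∈ C, c ≠ c' → d ≤ hammingDist c c' := by
  classical
  let syn : (β → A) → M := fun x => ∑ b, ψ (x b) • h b
  have hM : (Fintype.card M : ℚ) ≠ 0 := by simp
  obtain ⟨y, hy⟩ := Fintype.exists_le_card_fiber_of_nsmul_le_card syn
    (b := (Fintype.card (β → A) : ℚ) / Fintype.card M) (by rw [nsmul_eq_mul, mul_div_cancel₀ _ hM])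
  refine ⟨univ.filter fun x => syn x = y, ?_, fun c hc c' hc' hne => ?_⟩
  · rw [div_le_iff₀ (by positivity), Fintype.card_fun] at hy
    exact_mod_cast hy
  · simp only [mem_filter, mem_univ, true_and] at hc hc'
    rw [← hammingDist_comp (fun _ => ψ) fun _ => ψ.injective, hammingDist_eq_hammingNorm,
      neg_add_eq_sub]
    refine le_hammingNorm_of_linearIndepOn h hh ?_ fun h0 => hne (funext fun b => ?_)
    · simp only [Pi.sub_apply, sub_smul, sum_sub_distrib]
      exact sub_eq_zero.2 (hc'.trans hc.symm)
    · exact (ψ.injective (by simpa [sub_eq_zero] using congrFun h0 b)).symm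

theorem linearIndepOn_of_card_lt_three {K ι : Type*} [Field K] [Fintype ι] [Nontrivial ι]
    (v : ι → K × K) (hv : ∀ i j, i ≠ j → (v i).1 * (v j).2 ≠ (v i).2 * (v j).1)
    (s : Finset ι) (hs : s.card < 3) : LinearIndepOn K v s := by
  classical
  obtain ⟨t, hst, -, ht⟩ := exists_subsuperset_card_eq (subset_univ s) (n := 2) (by omega)
    (by rw [card_univ]; exact Fintype.one_lt_card)
  obtain ⟨i, j, hij, rfl⟩ := card_eq_two.1 ht
  refine LinearIndepOn.mono ?_ (coe_subset.2 hst)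
  rw [coe_pair]
  refine (LinearIndepOn.pair_iff v hij).2 fun c d hcd => ?_
  have h1 : c * (v i).1 + d * (v j).1 = 0 := by simpa using congrArg Prod.fst hcd
  have h2 : c * (v i).2 + d * (v j).2 = 0 := by simpa using congrArg Prod.snd hcd
  have hdet := sub_ne_zero.2 (hv i j hij)
  constructor
  · exact (mul_eq_zero.1 (by linear_combination (v j).2 * h1 - (v j).1 * h2 :
      c * ((v i).1 * (v j).2 - (v i).2 * (v j).1) = 0)).resolve_right hdet
  · exact (mul_eq_zero.1 (by linear_combination (v i).1 * h2 - (v i).2 * h1 :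
      d * ((v i).1 * (v j).2 - (v i).2 * (v j).1) = 0)).resolve_right hdet

def projectiveLine {K : Type*} [Field K] : Option K → K × K
  | none => (0, 1)
  | some z => (1, z)

theorem projectiveLine_det_ne {K : Type*} [Field K] {p q : Option K} (hpq : p ≠ q) :
    (projectiveLine p).1 * (projectiveLine q).2 ≠ (projectiveLine p).2 * (projectiveLine q).1 := by
  rcases p with _ | z <;> rcases q with _ | w <;> simp_all [projectiveLine, eq_comm]

instance inst_s12 : Fact (Nat.Prime 17) := ⟨by norm_num⟩

theorem exists_distance_three_code_18 : ∃ C : Finset (Fin 18 → Fin 4 → ZMod 2),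
    16 ^ 18 ≤ C.card * 17 ^ 2 ∧ ∀ c ∈ C, ∀ c' ∈ C, c ≠ c' → 3 ≤ hammingDist c c' := by
  obtain ⟨ψ⟩ := Function.Embedding.nonempty_of_card_le (α := Fin 4 → ZMod 2) (β := ZMod 17)
    (by simp)
  let e : Fin 18 ≃ Option (ZMod 17) := Fintype.equivOfCardEq (by simp)
  simpa using exists_card_pow_le_card_mul_of_linearIndepOn ψ (projectiveLine ∘ e)
    (linearIndepOn_of_card_lt_three _ fun i j hij => projectiveLine_det_ne (e.injective.ne hij))

abbrev GF4 := GaloisField 2 2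

noncomputable instance : DecidableEq GF4 := Classical.decEq _

namespace GF4

theorem natCard : Nat.card GF4 = 4 := GaloisField.card 2 2 two_ne_zero

theorem pow_four (x : GF4) : x ^ 4 = x := by
  have := Fintype.ofFinite GF4
  have h := FiniteField.pow_card x
  rwa [Fintype.card_eq_nat_card, natCard] at h

theorem isIdempotentElem_sq_add_self (x : GF4) : IsIdempotentElem (x ^ 2 + x) := by
  have := pow_four x
  unfold IsIdempotentElem
  grind

theorem exists_sq_eq_add_one : ∃ ω : GF4, ω ^ 2 = ω + 1 := by
  obtain ⟨x, hx0, hx1⟩ : ∃ x : GF4, x ≠ 0 ∧ x ≠ 1 := by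
    by_contra! h
    have : Nat.card GF4 ≤ Nat.card Bool :=
      Nat.card_le_card_of_surjective (fun b => if b then 1 else 0) fun x => by
        rcases eq_or_ne x 0 with hx | hx
        · exact ⟨false, hx.symm⟩
        · exact ⟨true, (h x hx).symm⟩
    simp [natCard] at this
  refine ⟨x, ?_⟩
  rcases IsIdempotentElem.iff_eq_zero_or_one.1 (isIdempotentElem_sq_add_self x) with h | h
  · have : x * (x + 1) = 0 := by grind
    rcases mul_eq_zero.1 this with h' | h'
    · exact absurd h' hx0
    · exact absurd (by grind) hx1
  · grind

noncomputable def ω : GF4 := exists_sq_eq_add_one.choose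

theorem ω_sq : ω ^ 2 = ω + 1 := exists_sq_eq_add_one.choose_spec

theorem eq_zero_or_one_or_ω_or_ω_add_one (x : GF4) : x = 0 ∨ x = 1 ∨ x = ω ∨ x = ω + 1 := by
  have hω := ω_sq
  rcases IsIdempotentElem.iff_eq_zero_or_one.1 (isIdempotentElem_sq_add_self x) with h | h
  · have : x * (x + 1) = 0 := by grind
    rcases mul_eq_zero.1 this with h' | h' <;> grind
  · have : (x - ω) * (x + ω + 1) = 0 := by grind
    rcases mul_eq_zero.1 this with h' | h' <;> grind

noncomputable def equivFin : Fin 4 ≃ GF4 :=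
  Equiv.ofBijective ![0, 1, ω, ω + 1] <| Surjective.bijective_of_nat_card_le
    (fun x => by
      rcases eq_zero_or_one_or_ω_or_ω_add_one x with h | h | h | h
      exacts [⟨0, h.symm⟩, ⟨1, h.symm⟩, ⟨2, h.symm⟩, ⟨3, h.symm⟩])
    (by simp [natCard])

@[simp] theorem equivFin_zero : equivFin 0 = 0 := rfl

end GF4

noncomputable def traceHerm (a : GF4) : GF4 →ₗ[ZMod 2] ZMod 2 :=
  Algebra.trace (ZMod 2) GF4 ∘ₗ LinearMap.mulLeft (ZMod 2) a ∘ₗ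
    (FiniteField.frobeniusAlgHom (ZMod 2) GF4).toLinearMap

theorem algebraMap_traceHerm (a x : GF4) :
    algebraMap (ZMod 2) GF4 (traceHerm a x) = a * x ^ 2 + a ^ 2 * x := by
  have := GF4.pow_four x
  simp [traceHerm, FiniteField.algebraMap_trace_eq_sum_pow, GaloisField.finrank,
    sum_range_succ, FiniteField.coe_frobeniusAlgHom]
  grind

def hermTable : Fin 4 → Fin 4 → ZMod 2 :=
  ![![0, 0, 0, 0], ![0, 0, 1, 1], ![0, 1, 0, 1], ![0, 1, 1, 0]]

theorem traceHerm_equivFin (i j : Fin 4) :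
    traceHerm (GF4.equivFin i) (GF4.equivFin j) = hermTable i j := by
  apply (algebraMap (ZMod 2) GF4).injective
  have := GF4.ω_sq
  rw [algebraMap_traceHerm]
  fin_cases i <;> fin_cases j <;> simp [GF4.equivFin, hermTable] <;> grind

section HermSyndrome

variable {ρ κ : Type*} [Fintype κ]

noncomputable def hermSyndrome (H : ρ → κ → GF4) : (κ → GF4) →ₗ[ZMod 2] (ρ → ZMod 2) :=
  LinearMap.pi fun r => ∑ k, traceHerm (H r k) ∘ₗ LinearMap.proj k

theorem hermSyndrome_apply (H : ρ → κ → GF4) (v : κ → GF4) (r : ρ) :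
    hermSyndrome H v r = ∑ k, traceHerm (H r k) (v k) := by
  simp [hermSyndrome]

theorem mem_ker_blockSyndrome_of_forall_orthogonal {ι β : Type*} [Fintype ι] [Fintype β]
    (e : β × κ ≃ ι) (H : ρ → κ → GF4) (hH : ∀ r, hermSyndrome H (H r) = 0) (v : ι → GF4)
    (hv : ∀ u ∈ LinearMap.ker (blockSyndrome e (hermSyndrome H)),
      ∑ i, (u i * v i ^ 2 + u i ^ 2 * v i) = 0) :
    v ∈ LinearMap.ker (blockSyndrome e (hermSyndrome H)) := by
  classical
  refine LinearMap.mem_ker.2 (funext fun b => funext fun r => ?_)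
  let u : ι → GF4 := fun i => (Pi.single b (H r) : β → κ → GF4) (e.symm i).1 (e.symm i).2
  have hu : u ∈ LinearMap.ker (blockSyndrome e (hermSyndrome H)) := by
    rw [LinearMap.mem_ker, blockSyndrome_single, hH, Pi.single_zero]
  apply (algebraMap (ZMod 2) GF4).injective
  rw [blockSyndrome_apply, hermSyndrome_apply, map_sum, Pi.zero_apply, Pi.zero_apply, map_zero,
    ← hv u hu, ← e.sum_comp, Fintype.sum_prod_type, sum_eq_single b]
  · simp [u, algebraMap_traceHerm]
  · intro b' _ hb'
    simp [u, hb']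
  · simp

end HermSyndrome

/-- Stabilizer generators of the five-qubit code: the cyclic shifts of `XZZXI`, written with
`X ↦ 1`, `Z ↦ ω` and entries numbered as in `GF4.equivFin`. -/
def fiveQubitCheckTable : Fin 4 → Fin 5 → Fin 4 :=
  ![![1, 2, 2, 1, 0], ![0, 1, 2, 2, 1], ![1, 0, 1, 2, 2], ![2, 1, 0, 1, 2]]

def fiveQubitTableSyndrome (w : Fin 5 → Fin 4) (r : Fin 4) : ZMod 2 :=
  ∑ s, hermTable (fiveQubitCheckTable r s) (w s)

theorem fiveQubitTableSyndrome_checkTable :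
    ∀ r, fiveQubitTableSyndrome (fiveQubitCheckTable r) = 0 := by
  decide

set_option maxHeartbeats 1000000 in
theorem fiveQubitTableSyndrome_surjective : Surjective fiveQubitTableSyndrome := by
  decide +kernel

set_option maxHeartbeats 1000000 in
theorem three_le_hammingNorm_of_fiveQubitTableSyndrome_eq_zero :
    ∀ w, fiveQubitTableSyndrome w = 0 → w ≠ 0 → 3 ≤ hammingNorm w := by
  decide +kernel

noncomputable def fiveQubitChecks (r : Fin 4) (s : Fin 5) : GF4 :=
  GF4.equivFin (fiveQubitCheckTable r s)

theorem hermSyndrome_fiveQubitChecks (v : Fin 5 → GF4) :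
    hermSyndrome fiveQubitChecks v = fiveQubitTableSyndrome (GF4.equivFin.symm ∘ v) := by
  funext r
  simp only [hermSyndrome_apply, fiveQubitTableSyndrome, fiveQubitChecks, comp_apply,
    ← traceHerm_equivFin, Equiv.apply_symm_apply]

theorem hermSyndrome_fiveQubitChecks_self (r : Fin 4) :
    hermSyndrome fiveQubitChecks (fiveQubitChecks r) = 0 := by
  rw [hermSyndrome_fiveQubitChecks, ← fiveQubitTableSyndrome_checkTable r]
  simp [fiveQubitChecks, comp_def]

theorem hermSyndrome_fiveQubitChecks_surjective : Surjective (hermSyndrome fiveQubitChecks) := by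
  intro y
  obtain ⟨w, rfl⟩ := fiveQubitTableSyndrome_surjective y
  refine ⟨GF4.equivFin ∘ w, ?_⟩
  rw [hermSyndrome_fiveQubitChecks, ← comp_assoc, Equiv.symm_comp_self, id_comp]

theorem three_le_hammingNorm_of_hermSyndrome_fiveQubitChecks_eq_zero (v : Fin 5 → GF4)
    (hv : hermSyndrome fiveQubitChecks v = 0) (hv0 : v ≠ 0) : 3 ≤ hammingNorm v := by
  have h0 : GF4.equivFin.symm 0 = 0 := (Equiv.symm_apply_eq _).2 GF4.equivFin_zero.symm
  rw [← hammingNorm_comp (fun _ => GF4.equivFin.symm) (fun _ => GF4.equivFin.symm.injective)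
    fun _ => h0]
  refine three_le_hammingNorm_of_fiveQubitTableSyndrome_eq_zero _
    (by rwa [hermSyndrome_fiveQubitChecks] at hv) fun hw => hv0 (funext fun s => ?_)
  exact ((Equiv.symm_apply_eq _).1 (congrFun hw s)).trans GF4.equivFin_zero

noncomputable def fiveQubitBlockSyndrome : (Fin 90 → GF4) →ₗ[ZMod 2] (Fin 18 → Fin 4 → ZMod 2) :=
  blockSyndrome finProdFinEquiv (hermSyndrome fiveQubitChecks)

theorem fiveQubitBlockSyndrome_surjective : Surjective fiveQubitBlockSyndrome :=
  blockSyndrome_surjective _ _ hermSyndrome_fiveQubitChecks_surjective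

theorem finrank_ker_fiveQubitBlockSyndrome :
    Module.finrank (ZMod 2) (LinearMap.ker fiveQubitBlockSyndrome) = 108 := by
  have h := fiveQubitBlockSyndrome.finrank_range_add_finrank_ker
  rw [LinearMap.range_eq_top.2 fiveQubitBlockSyndrome_surjective, finrank_top] at h
  simp only [Module.finrank_pi_fintype, GaloisField.finrank 2 two_ne_zero,
    Module.finrank_self, sum_const, card_univ, Fintype.card_fin, smul_eq_mul] at h
  omega

/-- **The union normalizer code of the nonadditive quantum code `((90, 2^81.825, 3))₂`.**
There are an `𝔽₂`-linear subspace `D ⊆ GF(4)^90` of `𝔽₂`-dimension `108` containing its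
trace-Hermitian dual, and a finite set `T` of coset representatives with `|T| · 17² ≥ 16^18`,
such that the cosets `t + D`, `t ∈ T`, are pairwise disjoint and any two distinct vectors in
their union are at Hamming distance at least `3`. -/
theorem exists_union_normalizer_code_90 :
    ∃ (D : Submodule (ZMod 2) (Fin 90 → GaloisField 2 2))
      (T : Finset (Fin 90 → GaloisField 2 2)),
      Module.finrank (ZMod 2) D = 108 ∧
      (∀ v : Fin 90 → GaloisField 2 2,
        (∀ u ∈ D, ∑ i, (u i * v i ^ 2 + u i ^ 2 * v i) = 0) → v ∈ D) ∧
      16 ^ 18 ≤ T.card * 17 ^ 2 ∧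
      (∀ t ∈ T, ∀ t' ∈ T, t ≠ t' →
        ∀ u ∈ D, ∀ u' ∈ D, t + u ≠ t' + u') ∧
      (∀ t ∈ T, ∀ t' ∈ T, ∀ u ∈ D, ∀ u' ∈ D, t + u ≠ t' + u' →
        3 ≤ Nat.card {i : Fin 90 | (t + u) i ≠ (t' + u') i}) := by
  obtain ⟨C, hC_card, hC_dist⟩ := exists_distance_three_code_18
  set σ := fiveQubitBlockSyndrome
  have hσ : Surjective σ := fiveQubitBlockSyndrome_surjective
  have hsyn : ∀ c, ∀ u ∈ LinearMap.ker σ, σ (surjInv hσ c + u) = c := by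
    intro c u hu
    rw [map_add, LinearMap.mem_ker.1 hu, add_zero, surjInv_eq hσ c]
  refine ⟨LinearMap.ker σ, C.image (surjInv hσ), finrank_ker_fiveQubitBlockSyndrome,
    mem_ker_blockSyndrome_of_forall_orthogonal _ _ hermSyndrome_fiveQubitChecks_self, ?_, ?_, ?_⟩
  · rwa [card_image_of_injective _ (injective_surjInv hσ)]
  · simp only [mem_image]
    rintro _ ⟨c, -, rfl⟩ _ ⟨c', -, rfl⟩ hne u hu u' hu' heq
    exact hne (congrArg _ (by simpa [hsyn c u hu, hsyn c' u' hu'] using congrArg σ heq))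
  · simp only [mem_image]
    rintro _ ⟨c, hc, rfl⟩ _ ⟨c', hc', rfl⟩ u hu u' hu' hne
    rw [natCard_setOf_ne_eq_hammingDist]
    exact le_hammingDist_of_blockSyndrome_mem _ _
      three_le_hammingNorm_of_hermSyndrome_fiveQubitChecks_eq_zero hC_dist
      ((hsyn c u hu).symm ▸ hc) ((hsyn c' u' hu').symm ▸ hc') hne
end

section
/- There exists a code C ⊆ (Fin 6 → Fin 4) with |C| ≥ 164 such that any two distinct codewords of C are at Hamming distance at least 3. (Such a nonlinear (6, 164, 3) code over an alphabet of size 4, where 164 = ⌈4^6/5²⌉, is obtained from the linear MDS code [6,4,3] over GF(5) by restriction to a sub-alphabet of size 4.) -/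
/-!
Take a parity-check matrix `H` over `𝔽₅` with six pairwise linearly independent columns, so that
its kernel is the `[6, 4, 3]` MDS code. Each fibre of the syndrome map `x ↦ H x` is a coset of that
code, hence has minimum distance `3`. Embedding the alphabet `Fin 4` into `𝔽₅` preserves Hamming
distances, and the `4 ^ 6 = 4096` words over `Fin 4` fall into `5 ^ 2 = 25` syndromes, so by
pigeonhole one fibre contains at least `⌈4096 / 25⌉ = 164` of them.
-/

open Finset Function

section ParityCheck

variable {ι R M : Type*} [Fintype ι] [Ring R] [DecidableEq R] [AddCommGroup M] [Module R M]
  {h : ι → M} {d : ℕ}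

theorem le_hammingNorm_of_sum_smul_eq_zero
    (hind : ∀ s : Finset ι, #s < d → LinearIndepOn R h (s : Set ι))
    {v : ι → R} (hv : ∑ i, v i • h i = 0) (hv0 : v ≠ 0) : d ≤ hammingNorm v := by
  by_contra! hlt
  have hsupp : ∑ i with v i ≠ 0, v i • h i = 0 := by
    rw [← hv]
    exact sum_filter_of_ne fun i _ hne hvi ↦ hne (by rw [hvi, zero_smul])
  obtain ⟨i, hi⟩ := ne_iff.mp hv0
  exact hi (linearIndepOn_finset_iff.mp (hind _ hlt) v hsupp i (by simpa using hi))

theorem le_hammingDist_of_sum_smul_eq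
    (hind : ∀ s : Finset ι, #s < d → LinearIndepOn R h (s : Set ι))
    {x y : ι → R} (hxy : ∑ i, x i • h i = ∑ i, y i • h i) (hne : x ≠ y) :
    d ≤ hammingDist x y := by
  rw [hammingDist_eq_hammingNorm]
  refine le_hammingNorm_of_sum_smul_eq_zero hind ?_ (mt neg_add_eq_zero.mp hne)
  simp only [Pi.add_apply, Pi.neg_apply, add_smul, neg_smul, sum_add_distrib, sum_neg_distrib, hxy,
    neg_add_cancel]

theorem Fintype.exists_lt_natCard_preimage {α β : Type*} [Fintype α] [Fintype β]
    (f : α → β) {n : ℕ} (hn : Fintype.card β * n < Fintype.card α) :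
    ∃ b, n < Nat.card (f ⁻¹' {b}) := by
  classical
  obtain ⟨b, hb⟩ := Fintype.exists_lt_card_fiber_of_mul_lt_card f hn
  rw [← Fintype.card_subtype, ← Nat.card_eq_fintype_card] at hb
  exact ⟨b, hb⟩

theorem exists_code_of_linearIndepOn [Fintype M] {α : Type*} [Fintype α] [DecidableEq α]
    {φ : α → R} (hφ : Injective φ)
    (hind : ∀ s : Finset ι, #s < d → LinearIndepOn R h (s : Set ι))
    {n : ℕ} (hn : Fintype.card M * n < Fintype.card α ^ Fintype.card ι) :
    ∃ C : Set (ι → α), n < Nat.card C ∧ ∀ x ∈ C, ∀ y ∈ C, x ≠ y → d ≤ hammingDist x y := by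
  classical
  let syndrome (x : ι → α) : M := ∑ i, φ (x i) • h i
  obtain ⟨b, hb⟩ := Fintype.exists_lt_natCard_preimage syndrome (n := n) (by simpa using hn)
  refine ⟨syndrome ⁻¹' {b}, hb, fun x hx y hy hne ↦ ?_⟩
  rw [← hammingDist_comp (fun _ ↦ φ) fun _ ↦ hφ]
  exact le_hammingDist_of_sum_smul_eq hind (hx.trans hy.symm) fun hxy ↦
    hne (funext fun i ↦ hφ (congrFun hxy i))

end ParityCheck

/-- Parity-check matrix, by columns, of the doubly extended Reed–Solomon code `[6, 4, 3]` over
`𝔽₅`. -/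
def rsParityCheckColumn : Fin 6 → ZMod 5 × ZMod 5 :=
  ![(1, 0), (1, 1), (1, 2), (1, 3), (1, 4), (0, 1)]

theorem rsParityCheckColumn_linearIndepOn (s : Finset (Fin 6)) (hs : #s < 3) :
    LinearIndepOn (ZMod 5) rsParityCheckColumn (s : Set (Fin 6)) := by
  interval_cases hcard : #s
  · simp [card_eq_zero.mp hcard]
  · obtain ⟨i, rfl⟩ := card_eq_one.mp hcard
    rw [coe_singleton]
    refine .singleton' ?_
    clear hs hcard; revert i; decide
  · obtain ⟨i, j, hij, rfl⟩ := card_eq_two.mp hcard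
    rw [coe_pair, LinearIndepOn.pair_iff _ hij]
    clear hs hcard; revert i j; decide

/-- **A nonlinear `(6, 164, 3)₄` code.**
There is a code of length `6` over an alphabet of size `4` with at least `164 = ⌈4^6/5²⌉`
codewords and minimum Hamming distance at least `3` (obtained from the MDS code `[6,4,3]` over
`GF(5)` by restriction to a sub-alphabet of size `4`). -/
theorem exists_code_6_164_3 :
    ∃ C : Set (Fin 6 → Fin 4),
      164 ≤ Nat.card C ∧
      (∀ x ∈ C, ∀ y ∈ C, x ≠ y → 3 ≤ hammingDist x y) := by
  have hembed : Injective fun a : Fin 4 ↦ ((a : ℕ) : ZMod 5) := by decide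
  exact exists_code_of_linearIndepOn hembed rsParityCheckColumn_linearIndepOn (n := 163)
    (by simp)
end
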